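/- Let N ∈ {3,4,5}, R ≥ 1 and 0 < λ ≤ R². Let W(x) = (1+|x|²/(N(N−2)))^{−(N−2)/2}, ΛW = ((N−2)/2)W + x·∇W, ζ(λ) = (λ + R²/(N(N−2)))^{−(N−2)/2}, and define P_λ : ℝ^N → ℝ by P_λ(x) = −λ^{−N/2}(ΛW)(x/λ) − ζ'(λ) for |x| < R√λ and P_λ(x) = 0 for |x| ≥ R√λ (this is ∂_λV(λ), the λ-derivative of the truncated bubble). Then there is a constant C depending only on N such that ‖P_λ‖_{L^{2N/(N+2)}(ℝ^N)} ≤ C R^{(6−N)/2} λ^{(N−2)/4}. -/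

import Mathlib

open MeasureTheory

open Metric Set Module ENNReal

lemma ball_lintegral_rpow_neg (N : ℕ) (hN : 0 < N) {β : ℝ} (hβ0 : 0 ≤ β) (hβ : β < N) :
    ∃ c : ℝ≥0∞, c ≠ ⊤ ∧ ∀ r : ℝ, 0 < r →
      (∫⁻ x in ball (0 : EuclideanSpace ℝ (Fin N)) r, (‖x‖₊ : ℝ≥0∞) ^ (-β)) ≤
        ENNReal.ofReal (r ^ ((N : ℝ) - β)) * c := by
  haveI : Nonempty (Fin N) := ⟨⟨0, hN⟩⟩
  set E := EuclideanSpace ℝ (Fin N) with hE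
  set v1 : ℝ≥0∞ := volume (closedBall (0 : E) 1) with hv1def
  have hv1 : v1 ≠ ⊤ := measure_closedBall_lt_top.ne
  have hgeo : ENNReal.ofReal ((2 : ℝ) ^ (β - N)) < 1 := by
    rw [← ENNReal.ofReal_one]
    exact (ENNReal.ofReal_lt_ofReal_iff_of_nonneg (by positivity)).mpr
      (Real.rpow_lt_one_of_one_lt_of_neg one_lt_two (by linarith))
  refine ⟨ENNReal.ofReal ((2 : ℝ) ^ β) * v1 * (1 - ENNReal.ofReal ((2 : ℝ) ^ (β - N)))⁻¹,
    ENNReal.mul_ne_top (ENNReal.mul_ne_top ENNReal.ofReal_ne_top hv1)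
      (ENNReal.inv_ne_top.mpr (tsub_pos_of_lt hgeo).ne'), ?_⟩
  intro r hr
  set q : ℝ := 2⁻¹ with hq
  have hq0 : (0 : ℝ) < q := by norm_num [hq]
  set S : ℕ → Set E := fun k => closedBall (0 : E) (r * q ^ k) \ closedBall 0 (r * q ^ (k + 1))
    with hS
  have h0 : (volume : Measure E) {0} = 0 := measure_singleton 0
  have step1 : (∫⁻ x in ball (0 : E) r, (‖x‖₊ : ℝ≥0∞) ^ (-β)) =
      ∫⁻ x in ball (0 : E) r \ {0}, (‖x‖₊ : ℝ≥0∞) ^ (-β) :=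
    (setLIntegral_congr (diff_null_ae_eq_self h0)).symm
  have hsub : ball (0 : E) r \ {0} ⊆ ⋃ k, S k := by
    rintro x ⟨hxr, hx0⟩
    have hx : 0 < ‖x‖ := norm_pos_iff.mpr (by simpa using hx0)
    have hxr' : ‖x‖ < r := mem_ball_zero_iff.1 hxr
    have h1 : 1 < r / ‖x‖ := (one_lt_div hx).2 hxr'
    set k := ⌊Real.logb 2 (r / ‖x‖)⌋₊ with hk
    have hlog0 : 0 ≤ Real.logb 2 (r / ‖x‖) := Real.logb_nonneg one_lt_two h1.le
    have hlogb : (2 : ℝ) ^ Real.logb 2 (r / ‖x‖) = r / ‖x‖ :=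
      Real.rpow_logb two_pos (by norm_num) (by positivity)
    have hk1 : (2 : ℝ) ^ k ≤ r / ‖x‖ := by
      calc (2 : ℝ) ^ k = (2 : ℝ) ^ (k : ℝ) := (Real.rpow_natCast 2 k).symm
        _ ≤ (2 : ℝ) ^ Real.logb 2 (r / ‖x‖) :=
            Real.rpow_le_rpow_of_exponent_le one_le_two (Nat.floor_le hlog0)
        _ = r / ‖x‖ := hlogb
    have hk2 : r / ‖x‖ < (2 : ℝ) ^ (k + 1) := by
      calc r / ‖x‖ = (2 : ℝ) ^ Real.logb 2 (r / ‖x‖) := hlogb.symm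
        _ < (2 : ℝ) ^ ((k : ℝ) + 1) :=
            Real.rpow_lt_rpow_of_exponent_lt one_lt_two (Nat.lt_floor_add_one _)
        _ = (2 : ℝ) ^ (k + 1) := by
            rw [← Real.rpow_natCast 2 (k + 1)]; norm_num
    have hqpow : ∀ m : ℕ, r * q ^ m = r / 2 ^ m := by
      intro m; rw [hq, inv_pow, ← div_eq_mul_inv]
    refine mem_iUnion.2 ⟨k, mem_closedBall_zero_iff.2 ?_, fun hmem => ?_⟩
    · rw [hqpow]
      rw [le_div_iff₀ hx] at hk1
      rw [le_div_iff₀ (by positivity : (0:ℝ) < 2 ^ k)]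
      linarith
    · have : ‖x‖ ≤ r * q ^ (k + 1) := mem_closedBall_zero_iff.1 hmem
      rw [hqpow, le_div_iff₀ (by positivity : (0:ℝ) < 2 ^ (k+1))] at this
      rw [div_lt_iff₀ hx] at hk2
      linarith
  have hSk_bound : ∀ k : ℕ, (∫⁻ x in S k, (‖x‖₊ : ℝ≥0∞) ^ (-β)) ≤
      ENNReal.ofReal ((r * q ^ (k + 1)) ^ (-β) * (r * q ^ k) ^ (N : ℕ)) * v1 := by
    intro k
    have ht : (0 : ℝ) < r * q ^ (k + 1) := by positivity
    have hb1 : ∀ x ∈ S k, (‖x‖₊ : ℝ≥0∞) ^ (-β) ≤ ENNReal.ofReal ((r * q ^ (k + 1)) ^ (-β)) := by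
      intro x hxS
      have hxn : r * q ^ (k + 1) ≤ ‖x‖ := by
        by_contra hcon
        exact hxS.2 (mem_closedBall_zero_iff.2 (le_of_not_ge (fun h => hcon (by linarith))))
      rw [← ENNReal.ofReal_rpow_of_pos ht, ENNReal.rpow_neg, ENNReal.rpow_neg]
      refine ENNReal.inv_le_inv.2 (ENNReal.rpow_le_rpow ?_ hβ0)
      rw [← ENNReal.ofReal_coe_nnreal, coe_nnnorm]
      exact ENNReal.ofReal_le_ofReal hxn
    have hSmeas : MeasurableSet (S k) :=
      measurableSet_closedBall.diff measurableSet_closedBall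
    calc (∫⁻ x in S k, (‖x‖₊ : ℝ≥0∞) ^ (-β))
        ≤ ∫⁻ _ in S k, ENNReal.ofReal ((r * q ^ (k + 1)) ^ (-β)) :=
          setLIntegral_mono' hSmeas hb1
      _ = ENNReal.ofReal ((r * q ^ (k + 1)) ^ (-β)) * volume (S k) := setLIntegral_const _ _
      _ ≤ ENNReal.ofReal ((r * q ^ (k + 1)) ^ (-β)) *
            (ENNReal.ofReal ((r * q ^ k) ^ finrank ℝ E) * v1) := by
          refine mul_le_mul_right ?_ _
          rw [← Measure.addHaar_closedBall' volume (0 : E) (by positivity)]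
          exact measure_mono diff_subset
      _ = ENNReal.ofReal ((r * q ^ (k + 1)) ^ (-β) * (r * q ^ k) ^ (N : ℕ)) * v1 := by
          rw [finrank_euclideanSpace_fin, ← mul_assoc, ← ENNReal.ofReal_mul (by positivity)]
  have key : ∀ k : ℕ, (r * q ^ (k + 1)) ^ (-β) * (r * q ^ k) ^ (N : ℕ) =
      r ^ ((N : ℝ) - β) * (2 : ℝ) ^ β * ((2 : ℝ) ^ (β - (N : ℝ))) ^ k := by
    intro k
    have h2 : (0 : ℝ) < 2 := two_pos
    have hq2 : ∀ m : ℕ, (q : ℝ) ^ m = (2 : ℝ) ^ (-(m : ℝ)) := by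
      intro m
      rw [hq, inv_pow, ← Real.rpow_natCast 2 m, ← Real.rpow_neg (by norm_num)]
    rw [hq2 (k + 1), hq2 k]
    rw [Real.mul_rpow hr.le (Real.rpow_nonneg (by norm_num) _)]
    rw [← Real.rpow_natCast (r * (2:ℝ) ^ (-(k:ℝ))) N,
      Real.mul_rpow hr.le (Real.rpow_nonneg (by norm_num) _)]
    rw [← Real.rpow_mul (by norm_num : (0:ℝ) ≤ 2), ← Real.rpow_mul (by norm_num : (0:ℝ) ≤ 2)]
    rw [← Real.rpow_natCast ((2:ℝ) ^ (β - (N:ℝ))) k, ← Real.rpow_mul (by norm_num : (0:ℝ) ≤ 2)]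
    rw [mul_mul_mul_comm, ← Real.rpow_add hr, ← Real.rpow_add h2, mul_assoc,
      ← Real.rpow_add h2]
    push_cast
    congr 1
    · congr 1; ring
    · congr 1; ring
  calc (∫⁻ x in ball (0 : E) r, (‖x‖₊ : ℝ≥0∞) ^ (-β))
      = ∫⁻ x in ball (0 : E) r \ {0}, (‖x‖₊ : ℝ≥0∞) ^ (-β) := step1
    _ ≤ ∫⁻ x in ⋃ k, S k, (‖x‖₊ : ℝ≥0∞) ^ (-β) := lintegral_mono_set hsub
    _ ≤ ∑' k, ∫⁻ x in S k, (‖x‖₊ : ℝ≥0∞) ^ (-β) := lintegral_iUnion_le _ _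
    _ ≤ ∑' k, ENNReal.ofReal ((r * q ^ (k + 1)) ^ (-β) * (r * q ^ k) ^ (N : ℕ)) * v1 :=
        ENNReal.tsum_le_tsum hSk_bound
    _ = ∑' k, ENNReal.ofReal (r ^ ((N : ℝ) - β)) * ENNReal.ofReal ((2:ℝ) ^ β) * v1 *
          (ENNReal.ofReal ((2:ℝ) ^ (β - (N:ℝ)))) ^ k := by
        refine tsum_congr fun k => ?_
        rw [key k, ENNReal.ofReal_mul (by positivity), ENNReal.ofReal_mul (by positivity),
          ENNReal.ofReal_pow (by positivity)]
        ring
    _ = ENNReal.ofReal (r ^ ((N : ℝ) - β)) *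
          (ENNReal.ofReal ((2:ℝ) ^ β) * v1 * (1 - ENNReal.ofReal ((2:ℝ) ^ (β - (N:ℝ))))⁻¹) := by
        rw [ENNReal.tsum_mul_left, ENNReal.tsum_geometric, mul_assoc, mul_assoc]
        ring

open MeasureTheory Metric Set Module

lemma fderiv_W_eval (N : ℕ) (hN : 3 ≤ N) (W : EuclideanSpace ℝ (Fin N) → ℝ)
    (hW : ∀ x, W x = (1 + ‖x‖^2 / ((N : ℝ) * ((N : ℝ) - 2))) ^ (-(((N : ℝ) - 2) / 2)))
    (x : EuclideanSpace ℝ (Fin N)) :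
    fderiv ℝ W x x = (-(((N : ℝ) - 2) / 2)) *
      (1 + ‖x‖^2 / ((N : ℝ) * ((N : ℝ) - 2))) ^ (-((N : ℝ) / 2)) *
      (2 * ‖x‖^2 / ((N : ℝ) * ((N : ℝ) - 2))) := by
  have hN3 : (3 : ℝ) ≤ (N : ℝ) := by exact_mod_cast hN
  set a : ℝ := (N : ℝ) * ((N : ℝ) - 2) with ha
  have ha0 : 0 < a := by nlinarith
  set c : ℝ := -(((N : ℝ) - 2) / 2) with hc
  have hWf : W = fun y => (1 + ‖y‖^2 / a) ^ c := funext hW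
  have hu0 : (0 : ℝ) < 1 + ‖x‖^2 / a := by positivity
  have hu : HasFDerivAt (fun y : EuclideanSpace ℝ (Fin N) => 1 + ‖y‖^2 / a)
      ((a⁻¹ : ℝ) • (2 • (innerSL ℝ x))) x := by
    have h1 := (hasStrictFDerivAt_norm_sq x).hasFDerivAt
    have h2 := h1.const_smul (a⁻¹ : ℝ)
    have h3 := h2.const_add 1
    refine HasFDerivAt.congr_of_eventuallyEq h3 (Filter.Eventually.of_forall fun y => ?_)
    simp only [Pi.smul_apply, smul_eq_mul]; ring
  have hrpow : HasDerivAt (fun t : ℝ => t ^ c) (c * (1 + ‖x‖^2 / a) ^ (c - 1))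
      (1 + ‖x‖^2 / a) := Real.hasDerivAt_rpow_const (Or.inl hu0.ne')
  have hcomp := hrpow.comp_hasFDerivAt x hu
  have hcomp' : HasFDerivAt (fun y : EuclideanSpace ℝ (Fin N) => (1 + ‖y‖^2 / a) ^ c)
      ((c * (1 + ‖x‖^2 / a) ^ (c - 1)) • ((a⁻¹ : ℝ) • (2 • (innerSL ℝ x)))) x := hcomp
  rw [hWf, hcomp'.fderiv]
  have hinner : (innerSL ℝ x) x = ‖x‖ ^ 2 := by
    rw [innerSL_apply_apply, real_inner_self_eq_norm_sq]
  simp only [ContinuousLinearMap.smul_apply, ContinuousLinearMap.coe_smul',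
    Pi.smul_apply, smul_eq_mul, hinner]
  have hexp : c - 1 = -((N : ℝ) / 2) := by rw [hc]; ring
  rw [hexp]
  ring

set_option maxHeartbeats 1000000 in
/-- For `N ∈ {3,4,5}` there is `C = C(N)` such that for all `R ≥ 1` and `0 < λ ≤ R²`, the
`λ`-derivative `P_λ = ∂_λV(λ)` of the truncated bubble, given by
`P_λ(x) = −λ^{−N/2}(ΛW)(x/λ) − ζ'(λ)` for `|x| < R√λ` and `0` for `|x| ≥ R√λ`
(with `ΛW = ((N−2)/2)W + x·∇W` and `ζ'(λ) = −((N−2)/2)(λ + R²/(N(N−2)))^{−N/2}`), satisfies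
`‖P_λ‖_{L^{2N/(N+2)}(ℝ^N)} ≤ C R^{(6−N)/2} λ^{(N−2)/4}`. -/
theorem bubble_derivative_dual_Lp_bound
    (N : ℕ) (hN : N ∈ ({3, 4, 5} : Set ℕ)) :
    ∃ C > 0, ∀ R lam : ℝ, 1 ≤ R → 0 < lam → lam ≤ R^2 →
      ∀ W ΛW P : EuclideanSpace ℝ (Fin N) → ℝ,
        (∀ x, W x = (1 + ‖x‖^2 / ((N : ℝ) * ((N : ℝ) - 2))) ^ (-(((N : ℝ) - 2) / 2))) →
        (∀ x, ΛW x = (((N : ℝ) - 2) / 2) * W x + fderiv ℝ W x x) →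
        (∀ x, P x = if ‖x‖ < R * Real.sqrt lam then
            -(lam ^ (-((N : ℝ) / 2)) * ΛW (lam⁻¹ • x))
              - (-(((N : ℝ) - 2) / 2) *
                (lam + R^2 / ((N : ℝ) * ((N : ℝ) - 2))) ^ (-((N : ℝ) / 2)))
          else 0) →
        eLpNorm P (ENNReal.ofReal (2 * (N : ℝ) / ((N : ℝ) + 2))) volume
          ≤ ENNReal.ofReal (C * R ^ (((6 : ℝ) - N) / 2) * lam ^ (((N : ℝ) - 2) / 4)) := by
  have h35 : 3 ≤ N ∧ N ≤ 5 := by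
    rcases hN with h | h | h <;> simp_all <;> omega
  obtain ⟨h3, h5⟩ := h35
  have hν3 : (3 : ℝ) ≤ (N : ℝ) := by exact_mod_cast h3
  have hν5 : (N : ℝ) ≤ 5 := by exact_mod_cast h5
  set ν : ℝ := (N : ℝ) with hν
  set a : ℝ := ν * (ν - 2) with ha
  have ha0 : 0 < a := by nlinarith
  set p : ℝ := 2 * ν / (ν + 2) with hp
  have hν2 : (0 : ℝ) < ν + 2 := by linarith
  have hp0 : 0 < p := by positivity
  have hp1 : 1 ≤ p := by
    rw [hp, le_div_iff₀ hν2]; linarith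
  have hpν : p * (ν + 2) = 2 * ν := by rw [hp]; field_simp
  set β : ℝ := (ν - 2) * p with hβ
  have hβ0 : 0 < β := by
    have : 0 < ν - 2 := by linarith
    positivity
  have hβN : β < ν := by
    rw [hβ]; nlinarith
  obtain ⟨c0, hc0top, hc0⟩ := ball_lintegral_rpow_neg N (by omega) hβ0.le hβN
  set E := EuclideanSpace ℝ (Fin N) with hE
  haveI : Nonempty (Fin N) := ⟨⟨0, by omega⟩⟩
  set v1 : ℝ≥0∞ := volume (ball (0 : E) 1) with hv1
  have hv1top : v1 ≠ ⊤ := measure_ball_lt_top.ne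
  set D1 : ℝ := (c0 ^ (1/p)).toReal with hD1
  set D2 : ℝ := (v1 ^ (1/p)).toReal with hD2
  have hD1n : 0 ≤ D1 := ENNReal.toReal_nonneg
  have hD2n : 0 ≤ D2 := ENNReal.toReal_nonneg
  set K : ℝ := (3 * (ν - 2) / 2) * a ^ ((ν - 2)/2) with hK
  set K2 : ℝ := ((ν - 2)/2) * a ^ (ν/2) with hK2
  have hKn : 0 ≤ K := by
    have : (0:ℝ) ≤ a ^ ((ν-2)/2) := Real.rpow_nonneg ha0.le _
    have : (0:ℝ) ≤ 3 * (ν - 2) / 2 := by linarith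
    positivity
  have hK2n : 0 ≤ K2 := by
    have h1 : (0:ℝ) ≤ a ^ (ν/2) := Real.rpow_nonneg ha0.le _
    have h2 : (0:ℝ) ≤ (ν - 2)/2 := by linarith
    exact mul_nonneg h2 h1
  refine ⟨K * D1 + K2 * D2 + 1, by positivity, ?_⟩
  intro R lam hR hlam hlamR W ΛW P hW hΛ hP
  have hR0 : (0 : ℝ) < R := lt_of_lt_of_le one_pos hR
  set r : ℝ := R * Real.sqrt lam with hrdef
  have hr0 : 0 < r := by
    have := Real.sqrt_pos.2 hlam
    positivity
  set pE : ℝ≥0∞ := ENNReal.ofReal p with hpE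
  have hpE0 : pE ≠ 0 := by
    simpa [hpE] using (ENNReal.ofReal_pos.2 hp0).ne'
  have hpEtop : pE ≠ ⊤ := ENNReal.ofReal_ne_top
  have hpEtoReal : pE.toReal = p := ENNReal.toReal_ofReal hp0.le
  -- formula and bound for ΛW
  have hu0 : ∀ y : E, 0 < 1 + ‖y‖^2 / a := fun y => by positivity
  have hΛf : ∀ y : E, ΛW y = ((ν - 2)/2) * (1 + ‖y‖^2/a) ^ (-((ν - 2)/2))
      + (-((ν - 2)/2)) * (1 + ‖y‖^2/a) ^ (-(ν/2)) * (2 * ‖y‖^2/a) := by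
    intro y
    rw [hΛ y, hW y, fderiv_W_eval N h3 W hW y]
  have hΛbound : ∀ y : E, |ΛW y| ≤ (3 * (ν - 2)/2) * (1 + ‖y‖^2/a) ^ (-((ν - 2)/2)) := by
    intro y
    set u : ℝ := 1 + ‖y‖^2/a with hu
    have hu1 : 0 < u := hu0 y
    have hs2 : (0:ℝ) ≤ (ν - 2)/2 := by linarith
    have hw0 : (0:ℝ) ≤ 2 * ‖y‖^2/a := by positivity
    have hrn : (0:ℝ) ≤ u ^ (-((ν - 2)/2)) := Real.rpow_nonneg hu1.le _
    have hrn2 : (0:ℝ) ≤ u ^ (-(ν/2)) := Real.rpow_nonneg hu1.le _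
    have husplit : u ^ (-(ν/2)) = u ^ (-((ν - 2)/2)) * u⁻¹ := by
      rw [← Real.rpow_neg_one u, ← Real.rpow_add hu1]
      congr 1; ring
    have h1 : ‖y‖^2/a ≤ u := by rw [hu]; linarith
    have hterm : u ^ (-(ν/2)) * (2 * ‖y‖^2/a) ≤ 2 * u ^ (-((ν - 2)/2)) := by
      rw [husplit]
      have h2 : u⁻¹ * (2 * ‖y‖^2/a) ≤ 2 := by
        rw [inv_mul_le_iff₀ hu1]
        have : 2 * ‖y‖^2/a = 2 * (‖y‖^2/a) := by ring
        rw [this]; linarith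
      calc u ^ (-((ν - 2)/2)) * u⁻¹ * (2 * ‖y‖^2/a)
          = u ^ (-((ν - 2)/2)) * (u⁻¹ * (2 * ‖y‖^2/a)) := by ring
        _ ≤ u ^ (-((ν - 2)/2)) * 2 := mul_le_mul_of_nonneg_left h2 hrn
        _ = 2 * u ^ (-((ν - 2)/2)) := by ring
    rw [hΛf y]
    have e2 : (-((ν - 2)/2)) * u ^ (-(ν/2)) * (2 * ‖y‖^2/a)
        = -(((ν - 2)/2) * (u ^ (-(ν/2)) * (2 * ‖y‖^2/a))) := by ring
    calc |((ν - 2)/2) * u ^ (-((ν - 2)/2))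
          + (-((ν - 2)/2)) * u ^ (-(ν/2)) * (2 * ‖y‖^2/a)|
        ≤ |((ν - 2)/2) * u ^ (-((ν - 2)/2))|
          + |(-((ν - 2)/2)) * u ^ (-(ν/2)) * (2 * ‖y‖^2/a)| := abs_add_le _ _
      _ = ((ν - 2)/2) * u ^ (-((ν - 2)/2))
          + ((ν - 2)/2) * (u ^ (-(ν/2)) * (2 * ‖y‖^2/a)) := by
          rw [e2, abs_neg, abs_of_nonneg (mul_nonneg hs2 hrn),
            abs_of_nonneg (mul_nonneg hs2 (mul_nonneg hrn2 hw0))]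
      _ ≤ ((ν - 2)/2) * u ^ (-((ν - 2)/2)) + ((ν - 2)/2) * (2 * u ^ (-((ν - 2)/2))) := by
          have := mul_le_mul_of_nonneg_left hterm hs2
          linarith
      _ = (3 * (ν - 2)/2) * u ^ (-((ν - 2)/2)) := by ring
  -- pointwise bound for the main term
  set A : ℝ := K * lam ^ ((ν - 4)/2) with hA
  have hAn : 0 ≤ A := mul_nonneg hKn (Real.rpow_nonneg hlam.le _)
  have claim1 : ∀ x : E, x ≠ 0 →
      |lam ^ (-(ν/2)) * ΛW (lam⁻¹ • x)| ≤ A * ‖x‖ ^ (-(ν - 2)) := by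
    intro x hx
    have hxn : 0 < ‖x‖ := norm_pos_iff.2 hx
    set y : E := lam⁻¹ • x with hy
    have hyn : ‖y‖ = lam⁻¹ * ‖x‖ := by
      rw [hy, norm_smul, Real.norm_eq_abs, abs_of_pos (inv_pos.2 hlam)]
    have hyn0 : 0 < ‖y‖ := by rw [hyn]; positivity
    have hb1 : (1 + ‖y‖^2/a) ^ (-((ν - 2)/2)) ≤ (‖y‖^2/a) ^ (-((ν - 2)/2)) := by
      refine Real.rpow_le_rpow_of_nonpos (by positivity) (by linarith [hu0 y]) (by linarith)
    have hb2 : (‖y‖^2/a) ^ (-((ν - 2)/2)) = a ^ ((ν - 2)/2) * ‖y‖ ^ (-(ν - 2)) := by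
      rw [Real.div_rpow (by positivity) ha0.le, div_eq_mul_inv, ← Real.rpow_neg ha0.le, neg_neg,
        ← Real.rpow_natCast (‖y‖) 2, ← Real.rpow_mul (norm_nonneg y),
        show ((2:ℕ):ℝ) * (-((ν - 2)/2)) = -(ν - 2) by push_cast; ring, mul_comm]
    have hb3 : ‖y‖ ^ (-(ν - 2)) = lam ^ (ν - 2) * ‖x‖ ^ (-(ν - 2)) := by
      rw [hyn, Real.mul_rpow (inv_nonneg.2 hlam.le) (norm_nonneg x),
        Real.inv_rpow hlam.le, ← Real.rpow_neg hlam.le, neg_neg]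
    have hstep : |ΛW y| ≤ (3 * (ν - 2)/2) * (a ^ ((ν - 2)/2) * (lam ^ (ν - 2) * ‖x‖ ^ (-(ν - 2)))) := by
      refine (hΛbound y).trans ?_
      have h30 : (0:ℝ) ≤ 3 * (ν - 2)/2 := by linarith
      refine mul_le_mul_of_nonneg_left ?_ h30
      rw [← hb3, ← hb2]; exact hb1
    rw [abs_mul, abs_of_nonneg (Real.rpow_nonneg hlam.le _)]
    calc lam ^ (-(ν/2)) * |ΛW y|
        ≤ lam ^ (-(ν/2)) * ((3 * (ν - 2)/2) * (a ^ ((ν - 2)/2) * (lam ^ (ν - 2) * ‖x‖ ^ (-(ν - 2))))) :=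
          mul_le_mul_of_nonneg_left hstep (Real.rpow_nonneg hlam.le _)
      _ = (3 * (ν - 2)/2 * a ^ ((ν - 2)/2)) * (lam ^ (-(ν/2)) * lam ^ (ν - 2)) * ‖x‖ ^ (-(ν - 2)) := by
          ring
      _ = A * ‖x‖ ^ (-(ν - 2)) := by
          rw [← Real.rpow_add hlam, hA, hK,
            show -(ν/2) + (ν - 2) = (ν - 4)/2 by ring]
  -- decomposition of P
  set c2 : ℝ := ((ν - 2)/2) * (lam + R^2 / a) ^ (-(ν/2)) with hc2
  have hc2n : 0 ≤ c2 := by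
    have : (0:ℝ) ≤ (lam + R^2 / a) ^ (-(ν/2)) := Real.rpow_nonneg (by positivity) _
    have h2 : (0:ℝ) ≤ (ν - 2)/2 := by linarith
    exact mul_nonneg h2 this
  set f1 : E → ℝ := (Metric.ball (0:E) r).indicator
    (fun x => -(lam ^ (-(ν/2)) * ΛW (lam⁻¹ • x))) with hf1
  set f2 : E → ℝ := (Metric.ball (0:E) r).indicator (fun _ => c2) with hf2
  set g1 : E → ℝ := (Metric.ball (0:E) r).indicator (fun x => A * ‖x‖ ^ (-(ν - 2))) with hg1
  have hPsum : P = f1 + f2 := by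
    funext x
    rw [hP x]
    by_cases hx : ‖x‖ < r
    · have hmem : x ∈ Metric.ball (0:E) r := mem_ball_zero_iff.2 hx
      simp only [hf1, hf2, Pi.add_apply, Set.indicator_of_mem hmem, if_pos hx]
      ring
    · have hmem : x ∉ Metric.ball (0:E) r := fun h => hx (mem_ball_zero_iff.1 h)
      simp only [hf1, hf2, Pi.add_apply, Set.indicator_of_notMem hmem, if_neg hx]
      norm_num
  -- measurability
  have hΛcont : Continuous ΛW := by
    have : ΛW = fun y : E => ((ν - 2)/2) * (1 + ‖y‖^2/a) ^ (-((ν - 2)/2))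
        + (-((ν - 2)/2)) * (1 + ‖y‖^2/a) ^ (-(ν/2)) * (2 * ‖y‖^2/a) := funext hΛf
    rw [this]
    have hcu : Continuous fun y : E => 1 + ‖y‖^2/a :=
      continuous_const.add ((continuous_norm.pow 2).div_const a)
    have hc1 : Continuous fun y : E => (1 + ‖y‖^2/a) ^ (-((ν - 2)/2)) :=
      hcu.rpow_const fun y => Or.inl (hu0 y).ne'
    have hc2' : Continuous fun y : E => (1 + ‖y‖^2/a) ^ (-(ν/2)) :=
      hcu.rpow_const fun y => Or.inl (hu0 y).ne'
    fun_prop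
  have hf1m : AEStronglyMeasurable f1 (volume : Measure E) := by
    refine (Continuous.aestronglyMeasurable ?_).indicator measurableSet_ball
    fun_prop
  have hf2m : AEStronglyMeasurable f2 (volume : Measure E) :=
    aestronglyMeasurable_const.indicator measurableSet_ball
  -- helpers
  have hofReal_le : ∀ x : E, ENNReal.ofReal (‖x‖ ^ (-β)) ≤ (‖x‖₊ : ℝ≥0∞) ^ (-β) := by
    intro x
    rcases eq_or_ne x 0 with rfl | hx
    · simp [Real.zero_rpow (neg_ne_zero.2 hβ0.ne')]
    · have h0 : 0 < ‖x‖ := norm_pos_iff.2 hx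
      rw [← ENNReal.ofReal_coe_nnreal, coe_nnnorm, ENNReal.ofReal_rpow_of_pos h0]
  have hpow_ofReal : ∀ t : ℝ, 0 ≤ t → ∀ e : ℝ,
      (ENNReal.ofReal (t ^ e)) ^ (1/p) = ENNReal.ofReal (t ^ (e/p)) := by
    intro t ht e
    rw [ENNReal.ofReal_rpow_of_nonneg (Real.rpow_nonneg ht e) (by positivity),
      ← Real.rpow_mul ht, mul_one_div]
  have hν0 : ν ≠ 0 := by linarith
  have hexp2 : (ν - β)/p = (6 - ν)/2 := by
    rw [hβ, hp]
    field_simp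
    ring
  have hexp3 : ν/p = (ν + 2)/2 := by
    rw [hp]
    field_simp
  have hpE1 : 1 ≤ pE := by
    rw [hpE, ← ENNReal.ofReal_one]
    exact ENNReal.ofReal_le_ofReal hp1
  -- bound for f1 via g1
  have hf1g1 : eLpNorm f1 pE volume ≤ eLpNorm g1 pE volume := by
    have hae : ∀ᵐ x : E ∂volume, x ≠ 0 := by
      have hset : {x : E | ¬ x ≠ 0} = {0} := by ext z; simp
      rw [ae_iff, hset]
      exact measure_singleton 0
    refine eLpNorm_mono_ae ?_
    filter_upwards [hae] with x hx
    by_cases hxb : x ∈ Metric.ball (0:E) r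
    · simp only [hf1, hg1, Set.indicator_of_mem hxb, Real.norm_eq_abs, abs_neg]
      rw [abs_of_nonneg (mul_nonneg hAn (Real.rpow_nonneg (norm_nonneg x) _))]
      exact claim1 x hx
    · simp [hf1, hg1, Set.indicator_of_notMem hxb]
  have hg1bound : eLpNorm g1 pE volume ≤ ENNReal.ofReal (A * r ^ ((6 - ν)/2) * D1) := by
    rw [eLpNorm_eq_lintegral_rpow_enorm_toReal hpE0 hpEtop, hpEtoReal]
    have hpoint : ∀ x : E, ‖g1 x‖ₑ ^ p =
        (Metric.ball (0:E) r).indicator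
          (fun x => ENNReal.ofReal ((A * ‖x‖ ^ (-(ν - 2))) ^ p)) x := by
      intro x
      by_cases hx : x ∈ Metric.ball (0:E) r
      · simp only [hg1, Set.indicator_of_mem hx]
        rw [Real.enorm_eq_ofReal (mul_nonneg hAn (Real.rpow_nonneg (norm_nonneg x) _)),
          ENNReal.ofReal_rpow_of_nonneg
            (mul_nonneg hAn (Real.rpow_nonneg (norm_nonneg x) _)) hp0.le]
      · simp only [hg1, Set.indicator_of_notMem hx]
        simp [ENNReal.zero_rpow_of_pos hp0]
    have hlin : (∫⁻ x, ‖g1 x‖ₑ ^ p) =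
        ∫⁻ x in Metric.ball (0:E) r, ENNReal.ofReal ((A * ‖x‖ ^ (-(ν - 2))) ^ p) := by
      rw [lintegral_congr hpoint, lintegral_indicator measurableSet_ball]
    rw [hlin]
    have hins : ∀ x : E, ENNReal.ofReal ((A * ‖x‖ ^ (-(ν - 2))) ^ p) ≤
        ENNReal.ofReal (A ^ p) * ((‖x‖₊ : ℝ≥0∞) ^ (-β)) := by
      intro x
      rw [Real.mul_rpow hAn (Real.rpow_nonneg (norm_nonneg x) _),
        ← Real.rpow_mul (norm_nonneg x),
        show -(ν - 2) * p = -β by rw [hβ]; ring,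
        ENNReal.ofReal_mul (Real.rpow_nonneg hAn _)]
      exact mul_le_mul_right (hofReal_le x) _
    have hintb : (∫⁻ x in Metric.ball (0:E) r, ENNReal.ofReal ((A * ‖x‖ ^ (-(ν - 2))) ^ p)) ≤
        ENNReal.ofReal (A ^ p) * (ENNReal.ofReal (r ^ (ν - β)) * c0) := by
      calc (∫⁻ x in Metric.ball (0:E) r, ENNReal.ofReal ((A * ‖x‖ ^ (-(ν - 2))) ^ p))
          ≤ ∫⁻ x in Metric.ball (0:E) r, ENNReal.ofReal (A ^ p) * ((‖x‖₊ : ℝ≥0∞) ^ (-β)) :=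
            setLIntegral_mono' measurableSet_ball fun x _ => hins x
        _ = ENNReal.ofReal (A ^ p) * ∫⁻ x in Metric.ball (0:E) r, ((‖x‖₊ : ℝ≥0∞) ^ (-β)) :=
            lintegral_const_mul' _ _ ENNReal.ofReal_ne_top
        _ ≤ ENNReal.ofReal (A ^ p) * (ENNReal.ofReal (r ^ (ν - β)) * c0) :=
            mul_le_mul_right (hc0 r hr0) _
    refine le_trans (ENNReal.rpow_le_rpow hintb (by positivity : (0:ℝ) ≤ 1/p)) ?_
    rw [ENNReal.mul_rpow_of_nonneg _ _ (by positivity : (0:ℝ) ≤ 1/p),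
      ENNReal.mul_rpow_of_nonneg _ _ (by positivity : (0:ℝ) ≤ 1/p),
      hpow_ofReal A hAn p, div_self hp0.ne', Real.rpow_one,
      hpow_ofReal r hr0.le (ν - β), hexp2]
    have hcD1 : c0 ^ (1/p) = ENNReal.ofReal D1 :=
      (ENNReal.ofReal_toReal (ENNReal.rpow_ne_top_of_nonneg (by positivity) hc0top)).symm
    rw [hcD1, ← ENNReal.ofReal_mul (Real.rpow_nonneg hr0.le _), ← ENNReal.ofReal_mul hAn,
      ← mul_assoc]
  -- bound for f2
  haveI : Nontrivial E := by
    have : (1:ℕ) ≤ N := by omega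
    infer_instance
  have hballvol : volume (Metric.ball (0:E) r) = ENNReal.ofReal (r ^ (N:ℕ)) * v1 := by
    rw [hv1, Measure.addHaar_ball volume (0:E) hr0.le, finrank_euclideanSpace_fin]
  have hf2bound : eLpNorm f2 pE volume = ENNReal.ofReal (c2 * r ^ ((ν + 2)/2) * D2) := by
    rw [hf2, eLpNorm_indicator_const measurableSet_ball hpE0 hpEtop, hpEtoReal, hballvol,
      ENNReal.mul_rpow_of_nonneg _ _ (by positivity : (0:ℝ) ≤ 1/p),
      ← Real.rpow_natCast r N, hpow_ofReal r hr0.le (N:ℝ), hexp3]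
    have hvD2 : v1 ^ (1/p) = ENNReal.ofReal D2 :=
      (ENNReal.ofReal_toReal (ENNReal.rpow_ne_top_of_nonneg (by positivity) hv1top)).symm
    rw [hvD2, Real.enorm_eq_ofReal hc2n, ← ENNReal.ofReal_mul (Real.rpow_nonneg hr0.le _),
      ← ENNReal.ofReal_mul hc2n, ← mul_assoc]
  -- real-number estimates
  have hsq : Real.sqrt lam = lam ^ (1/2 : ℝ) := Real.sqrt_eq_rpow lam
  have hrsplit : ∀ e : ℝ, r ^ e = R ^ e * lam ^ (e/2) := by
    intro e
    rw [hrdef, hsq, Real.mul_rpow hR0.le (Real.rpow_nonneg hlam.le _),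
      ← Real.rpow_mul hlam.le, show (1/2 : ℝ) * e = e/2 by ring]
  have hE1 : A * r ^ ((6 - ν)/2) = K * (R ^ ((6 - ν)/2) * lam ^ ((ν - 2)/4)) := by
    rw [hA, hrsplit ((6 - ν)/2), show ((6 - ν)/2)/2 = (6 - ν)/4 by ring]
    have hlcomb : lam ^ ((ν - 4)/2) * lam ^ ((6 - ν)/4) = lam ^ ((ν - 2)/4) := by
      rw [← Real.rpow_add hlam]; congr 1; ring
    calc K * lam ^ ((ν - 4)/2) * (R ^ ((6 - ν)/2) * lam ^ ((6 - ν)/4))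
        = K * (R ^ ((6 - ν)/2) * (lam ^ ((ν - 4)/2) * lam ^ ((6 - ν)/4))) := by ring
      _ = K * (R ^ ((6 - ν)/2) * lam ^ ((ν - 2)/4)) := by rw [hlcomb]
  have hE2 : c2 * r ^ ((ν + 2)/2) ≤ K2 * (R ^ ((6 - ν)/2) * lam ^ ((ν - 2)/4)) := by
    have hc2b : c2 ≤ K2 * R ^ (-ν) := by
      have hmono : (lam + R^2 / a) ^ (-(ν/2)) ≤ (R^2 / a) ^ (-(ν/2)) :=
        Real.rpow_le_rpow_of_nonpos (by positivity) (by linarith) (by linarith)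
      have hRa : (R^2 / a) ^ (-(ν/2)) = a ^ (ν/2) * R ^ (-ν) := by
        rw [Real.div_rpow (by positivity) ha0.le, div_eq_mul_inv, ← Real.rpow_neg ha0.le,
          neg_neg, ← Real.rpow_natCast R 2, ← Real.rpow_mul hR0.le,
          show ((2:ℕ):ℝ) * (-(ν/2)) = -ν by push_cast; ring, mul_comm]
      calc c2 ≤ ((ν - 2)/2) * ((R^2 / a) ^ (-(ν/2))) := by
            rw [hc2]
            exact mul_le_mul_of_nonneg_left hmono (by linarith)
        _ = K2 * R ^ (-ν) := by rw [hRa, hK2]; ring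
    have hr2 : r ^ ((ν + 2)/2) = R ^ ((ν + 2)/2) * lam ^ ((ν + 2)/4) := by
      rw [hrsplit ((ν + 2)/2), show ((ν + 2)/2)/2 = (ν + 2)/4 by ring]
    have hlam4 : lam ^ ((ν + 2)/4) = lam * lam ^ ((ν - 2)/4) := by
      rw [show (ν + 2)/4 = 1 + (ν - 2)/4 by ring, Real.rpow_add hlam, Real.rpow_one]
    have hRcomb : R ^ (-ν) * R ^ ((ν + 2)/2) = R ^ ((2 - ν)/2) := by
      rw [← Real.rpow_add hR0]; congr 1; ring
    have hRcomb2 : R ^ ((2 - ν)/2) * R^2 = R ^ ((6 - ν)/2) := by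
      rw [← Real.rpow_natCast R 2, ← Real.rpow_add hR0]
      congr 1; push_cast; ring
    have hrp : (0:ℝ) ≤ r ^ ((ν + 2)/2) := Real.rpow_nonneg hr0.le _
    calc c2 * r ^ ((ν + 2)/2) ≤ (K2 * R ^ (-ν)) * r ^ ((ν + 2)/2) :=
          mul_le_mul_of_nonneg_right hc2b hrp
      _ = K2 * (R ^ ((2 - ν)/2) * lam ^ ((ν - 2)/4) * lam) := by
          rw [hr2, hlam4, ← hRcomb]; ring
      _ ≤ K2 * (R ^ ((2 - ν)/2) * lam ^ ((ν - 2)/4) * R^2) := by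
          refine mul_le_mul_of_nonneg_left ?_ hK2n
          refine mul_le_mul_of_nonneg_left hlamR ?_
          exact mul_nonneg (Real.rpow_nonneg hR0.le _) (Real.rpow_nonneg hlam.le _)
      _ = K2 * (R ^ ((6 - ν)/2) * lam ^ ((ν - 2)/4)) := by
          rw [← hRcomb2]; ring
  -- final assembly
  have hX0 : (0:ℝ) ≤ R ^ ((6 - ν)/2) * lam ^ ((ν - 2)/4) :=
    mul_nonneg (Real.rpow_nonneg hR0.le _) (Real.rpow_nonneg hlam.le _)
  calc eLpNorm P pE volume = eLpNorm (f1 + f2) pE volume := by rw [hPsum]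
    _ ≤ eLpNorm f1 pE volume + eLpNorm f2 pE volume := eLpNorm_add_le hf1m hf2m hpE1
    _ ≤ ENNReal.ofReal (A * r ^ ((6 - ν)/2) * D1) + ENNReal.ofReal (c2 * r ^ ((ν + 2)/2) * D2) :=
        add_le_add (hf1g1.trans hg1bound) (le_of_eq hf2bound)
    _ ≤ ENNReal.ofReal ((K * D1 + K2 * D2 + 1) * R ^ ((6 - ν)/2) * lam ^ ((ν - 2)/4)) := by
        rw [← ENNReal.ofReal_add
          (mul_nonneg (mul_nonneg hAn (Real.rpow_nonneg hr0.le _)) hD1n)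
          (mul_nonneg (mul_nonneg hc2n (Real.rpow_nonneg hr0.le _)) hD2n)]
        refine ENNReal.ofReal_le_ofReal ?_
        have t1 : A * r ^ ((6 - ν)/2) * D1 = K * D1 * (R ^ ((6 - ν)/2) * lam ^ ((ν - 2)/4)) := by
          rw [hE1]; ring
        have t2 : c2 * r ^ ((ν + 2)/2) * D2 ≤ K2 * D2 * (R ^ ((6 - ν)/2) * lam ^ ((ν - 2)/4)) := by
          have := mul_le_mul_of_nonneg_right hE2 hD2n
          calc c2 * r ^ ((ν + 2)/2) * D2
              ≤ K2 * (R ^ ((6 - ν)/2) * lam ^ ((ν - 2)/4)) * D2 := this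
            _ = K2 * D2 * (R ^ ((6 - ν)/2) * lam ^ ((ν - 2)/4)) := by ring
        nlinarith [t1, t2, hX0, mul_nonneg hKn hD1n, mul_nonneg hK2n hD2n]
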